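/- Let θ satisfy condition (A), let φ be the quotient substitution on B with substitution system (X_φ,σ), and let f : X_φ → ℤ(r) be a map such that for every y ∈ X_φ and every z = z_0z_1z_2… ∈ ℤ(r): f(y) = z if and only if for every k ∈ ℕ the word y[−Σ_{i=0}^{k} z_i r^i , −Σ_{i=0}^{k} z_i r^i + r^{k+1} − 1] is a basic r^{k+1}-block of φ (i.e. equals φ^{k+1}(b) for some letter b ∈ B). Then for every non-integer z ∈ ℤ(r), the fiber f^{−1}(z) contains exactly m(θ) points. -/

import Mathlib

open Set Topology

/-! ### Ellis semigroup of a dynamical system -/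

section Ellis

variable {X : Type*} [TopologicalSpace X]

/-- The Ellis (enveloping) semigroup of a dynamical system `(X, T)`: the closure of
`{T^n : n ∈ ℤ}` in `X → X` with the topology of pointwise convergence. -/
def ellisSemigroup (T : X ≃ₜ X) : Set (X → X) :=
  closure {f : X → X | ∃ n : ℤ, f = ⇑(T.toEquiv ^ n)}

/-- A (left) ideal of the Ellis semigroup. -/
def IsLeftIdealOf (T : X ≃ₜ X) (I : Set (X → X)) : Prop :=
  I.Nonempty ∧ I ⊆ ellisSemigroup T ∧ ∀ p ∈ ellisSemigroup T, ∀ q ∈ I, p ∘ q ∈ I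

/-- A minimal left ideal of the Ellis semigroup. -/
def IsMinimalLeftIdealOf (T : X ≃ₜ X) (I : Set (X → X)) : Prop :=
  IsLeftIdealOf T I ∧ ∀ J, IsLeftIdealOf T J → J ⊆ I → J = I

/-- Two points are proximal iff some element of the Ellis semigroup identifies them. -/
def ProximalIn (T : X ≃ₜ X) (x y : X) : Prop :=
  ∃ p ∈ ellisSemigroup T, p x = p y

end Ellis

/-! ### The shift on bi-infinite sequences and orbit closures -/

section Shift

variable {A : Type*}

/-- The shift map on bi-infinite sequences. -/
def shiftF (A : Type*) : (ℤ → A) → (ℤ → A) := fun x n => x (n + 1)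

/-- The inverse shift map on bi-infinite sequences. -/
def shiftFInv (A : Type*) : (ℤ → A) → (ℤ → A) := fun x n => x (n - 1)

variable [TopologicalSpace A]

/-- The shift-orbit closure of a bi-infinite sequence. -/
def orbitClosure (x : ℤ → A) : Set (ℤ → A) :=
  closure {y | ∃ n : ℤ, y = fun k => x (k + n)}

lemma self_mem_orbitClosure (x : ℤ → A) : x ∈ orbitClosure x :=
  subset_closure ⟨0, by funext k; simp⟩

lemma shiftF_mem_orbitClosure (x : ℤ → A) {y : ℤ → A} (hy : y ∈ orbitClosure x) :
    shiftF A y ∈ orbitClosure x := by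
  have hc : Continuous (shiftF A) := continuous_pi fun n => continuous_apply (n + 1)
  have h1 := image_closure_subset_closure_image
    (s := {y : ℤ → A | ∃ n : ℤ, y = fun k => x (k + n)}) hc (mem_image_of_mem _ hy)
  refine closure_mono ?_ h1
  rintro _ ⟨z, ⟨n, rfl⟩, rfl⟩
  refine ⟨n + 1, ?_⟩
  funext k
  show x (k + 1 + n) = x (k + (n + 1))
  congr 1; ring

lemma shiftFInv_mem_orbitClosure (x : ℤ → A) {y : ℤ → A} (hy : y ∈ orbitClosure x) :
    shiftFInv A y ∈ orbitClosure x := by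
  have hc : Continuous (shiftFInv A) := continuous_pi fun n => continuous_apply (n - 1)
  have h1 := image_closure_subset_closure_image
    (s := {y : ℤ → A | ∃ n : ℤ, y = fun k => x (k + n)}) hc (mem_image_of_mem _ hy)
  refine closure_mono ?_ h1
  rintro _ ⟨z, ⟨n, rfl⟩, rfl⟩
  refine ⟨n - 1, ?_⟩
  funext k
  show x (k - 1 + n) = x (k + (n - 1))
  congr 1; ring

/-- The shift, as a homeomorphism of the orbit closure of `x`. -/
def shiftHomOn (x : ℤ → A) : (orbitClosure x) ≃ₜ (orbitClosure x) where
  toFun y := ⟨shiftF A y.1, shiftF_mem_orbitClosure x y.2⟩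
  invFun y := ⟨shiftFInv A y.1, shiftFInv_mem_orbitClosure x y.2⟩
  left_inv y := by
    apply Subtype.ext; funext k
    show y.1 (k - 1 + 1) = y.1 k
    congr 1; ring
  right_inv y := by
    apply Subtype.ext; funext k
    show y.1 (k + 1 - 1) = y.1 k
    congr 1; ring
  continuous_toFun := Continuous.subtype_mk
    ((continuous_pi fun n => continuous_apply (n + 1)).comp continuous_subtype_val) _
  continuous_invFun := Continuous.subtype_mk
    ((continuous_pi fun n => continuous_apply (n - 1)).comp continuous_subtype_val) _

/-- The set of legal two-letter words of a subshift `Xs`. -/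
def legalPairs (Xs : Set (ℤ → A)) : Set (A × A) :=
  {ab | ∃ y ∈ Xs, ∃ i : ℤ, y i = ab.1 ∧ y (i + 1) = ab.2}

end Shift

/-! ### Substitutions of constant length -/

section Subst

variable {na r : ℕ} [NeZero na] [NeZero r]

/-- `wordIter θ k a j` is the `j`-th letter of the word `θ^k(a)` (of length `r^k`). -/
def wordIter (θ : Fin na → Fin r → Fin na) : ℕ → Fin na → ℕ → Fin na
  | 0, a, _ => a
  | k+1, a, j => wordIter θ k (θ a ⟨(j / r ^ k) % r, Nat.mod_lt _ (NeZero.pos r)⟩) (j % r ^ k)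

/-- A bi-infinite fixed point of the substitution `θ`. -/
def IsSubFix (θ : Fin na → Fin r → Fin na) (x : ℤ → Fin na) : Prop :=
  ∀ (n : ℤ) (m : Fin r), x (r * n + (m : ℕ)) = θ (x n) m

/-- `θ` is admissible: injective on letters and with non-periodic fixed points. -/
def AdmissibleSub (θ : Fin na → Fin r → Fin na) : Prop :=
  Function.Injective θ ∧
  ∀ x : ℤ → Fin na, IsSubFix θ x → ∀ p : ℤ, p ≠ 0 → ∃ k : ℤ, x (k + p) ≠ x k

/-- `θ` is primitive: some power of `θ` maps any letter to a word containing all letters. -/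
def PrimitiveSub (θ : Fin na → Fin r → Fin na) : Prop :=
  ∃ k : ℕ, ∀ a b : Fin na, ∃ j < r ^ k, wordIter θ k a j = b

/-- `θ` is coincidence-free. -/
def CoincidenceFreeSub (θ : Fin na → Fin r → Fin na) : Prop :=
  ∀ a b : Fin na, a ≠ b → ∀ m : Fin r, θ a m ≠ θ b m

/-- `θ` is in canonical form: `θ(a)` begins and ends with `a`. -/
def CanonicalFormSub (θ : Fin na → Fin r → Fin na) : Prop :=
  ∀ a, θ a ⟨0, NeZero.pos r⟩ = a ∧ θ a ⟨r - 1, Nat.sub_lt (NeZero.pos r) one_pos⟩ = a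

/-- `HeightData θ xh d m` : `xh` is a bi-infinite fixed point of `θ` with `xh 0 = 0`,
`d` is the gcd of the set `M = {n ≥ 1 : xh n = 0}` of positive occurrences of `0`,
and `m` is the height `m(θ)`: the largest divisor of `d` coprime to `r`. -/
def HeightData (θ : Fin na → Fin r → Fin na) (xh : ℤ → Fin na) (d m : ℕ) : Prop :=
  IsSubFix θ xh ∧ xh 0 = 0 ∧
  (∀ k : ℕ, 1 ≤ k → xh (k : ℤ) = 0 → d ∣ k) ∧
  (∀ e : ℕ, (∀ k : ℕ, 1 ≤ k → xh (k : ℤ) = 0 → e ∣ k) → e ∣ d) ∧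
  0 < m ∧ m ∣ d ∧ Nat.Coprime m r ∧
  ∀ m' : ℕ, m' ∣ d → Nat.Coprime m' r → m' ∣ m

/-- `z(i) = (min {n : θ(i)_n = 0}) mod m`. -/
noncomputable def subZ (θ : Fin na → Fin r → Fin na) (m : ℕ) (i : Fin na) : ℕ :=
  sInf {n : ℕ | ∃ h : n < r, θ i ⟨n, h⟩ = 0} % m

/-- The class `S_p = {i : z(i) ≡ -p (mod m)}`. -/
def subS (θ : Fin na → Fin r → Fin na) (m : ℕ) (p : ℕ) : Set (Fin na) :=
  {i | Int.ModEq (m : ℤ) (subZ θ m i : ℤ) (-(p : ℤ))}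

/-- The set `P(i,j,k) = {θ^k(p)[j, j+1] : p ∈ S_i}`. -/
def subP (θ : Fin na → Fin r → Fin na) (m : ℕ) (i j k : ℕ) : Set (Fin na × Fin na) :=
  {ab | ∃ p ∈ subS θ m i, ab = (wordIter θ k p j, wordIter θ k p (j + 1))}

/-- The collection of all classes `P(i,j,k)` for `i < m(θ)`, `k ≥ 1`, `0 ≤ j ≤ r^k - 2`. -/
def subClasses (θ : Fin na → Fin r → Fin na) (m : ℕ) : Set (Set (Fin na × Fin na)) :=
  {P | ∃ i < m, ∃ k, 1 ≤ k ∧ ∃ j, j + 2 ≤ r ^ k ∧ P = subP θ m i j k}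

/-- Condition (A): the collection of the `P(i,j,k)` is a partition of the set of legal
two-letter words. -/
def subCondA (θ : Fin na → Fin r → Fin na) (m : ℕ) (Xs : Set (ℤ → Fin na)) : Prop :=
  (∀ C ∈ subClasses θ m, C.Nonempty) ∧
  (⋃₀ subClasses θ m = legalPairs Xs) ∧
  ∀ C ∈ subClasses θ m, ∀ D ∈ subClasses θ m, C = D ∨ Disjoint C D

/-- Data of the quotient substitution `φ` on the alphabet `B = Fin n` of classes:
`c` is the labelling of legal two-letter words by their classes (with the class of words
whose last letter lies in `S_0` labelled `0`), and `φ(b)_0 = b`,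
`φ(b)_h = [θ(a_b)[h-1,h]]` for `1 ≤ h ≤ r-1`, where `a_b` is any last letter of a word
in class `b`. -/
def QuotientSubData {n : ℕ} [NeZero n] (θ : Fin na → Fin r → Fin na) (m : ℕ)
    (Xs : Set (ℤ → Fin na)) (c : Fin na × Fin na → Fin n)
    (φ : Fin n → Fin r → Fin n) : Prop :=
  (∀ b : Fin n, ∃ ab ∈ legalPairs Xs, c ab = b) ∧
  (∀ ab ∈ legalPairs Xs, ∀ cd ∈ legalPairs Xs,
    (c ab = c cd ↔ ∃ C ∈ subClasses θ m, ab ∈ C ∧ cd ∈ C)) ∧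
  (∀ ab ∈ legalPairs Xs, c ab = ⟨0, NeZero.pos n⟩ → ab.2 ∈ subS θ m 0) ∧
  (∀ b : Fin n, φ b ⟨0, NeZero.pos r⟩ = b) ∧
  ∀ b : Fin n, ∀ ab ∈ legalPairs Xs, c ab = b →
    ∀ (h : ℕ) (_ : 1 ≤ h) (hh : h < r),
      φ b ⟨h, hh⟩ = c (θ ab.2 ⟨h - 1, lt_of_le_of_lt (Nat.sub_le h 1) hh⟩, θ ab.2 ⟨h, hh⟩)

/-- The `i`-th column set `C_i = {φ(b)_i : b ∈ B}` of a substitution `φ`. -/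
def colSet {n : ℕ} (φ : Fin n → Fin r → Fin n) (i : ℕ) (hi : i < r) : Set (Fin n) :=
  {b' | ∃ b, φ b ⟨i, hi⟩ = b'}

/-- The number `q` of distinct column sets `C_1, …, C_{r-1}` of `φ`. -/
noncomputable def numColSets {n : ℕ} (φ : Fin n → Fin r → Fin n) : ℕ :=
  {C : Set (Fin n) | ∃ i, ∃ hi : i < r, 1 ≤ i ∧ C = colSet φ i hi}.ncard

/-- The 2-block sliding block code induced by a block map `c`. -/
def PsiMap {A B : Type*} (c : A × A → B) (x : ℤ → A) : ℤ → B :=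
  fun i => c (x (i - 1), x i)

end Subst

/-! ### IP sets and IP cluster points -/

/-- A subset of `ℤ` is an IP set if it is the set of finite sums of a sequence of
distinct integers. -/
def IsIPSet (Q : Set ℤ) : Prop :=
  ∃ g : ℕ → ℤ, Function.Injective g ∧
    Q = {s | ∃ F : Finset ℕ, F.Nonempty ∧ s = ∑ i ∈ F, g i}

/-- `f` is an IP cluster point of the system `(X,T)` along the IP set `P`. -/
def IsIPCP {X : Type*} [TopologicalSpace X] (T : X ≃ₜ X) (f : X → X) (P : Set ℤ) : Prop :=
  ∀ U ∈ nhds f, ∃ Q : Set ℤ, IsIPSet Q ∧ Q ⊆ {k ∈ P | ⇑(T.toEquiv ^ k) ∈ U}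

set_option linter.unusedSectionVars false
namespace Stmt9Aux

/-! generic foldl reachability -/
section Fold
variable {α ι : Type*} (σ : ι → α → α)

def foldApp (L : List ι) (i : α) : α := L.foldl (fun x h => σ h x) i

lemma foldApp_nil (i : α) : foldApp σ [] i = i := rfl
lemma foldApp_cons (h : ι) (L : List ι) (i : α) :
    foldApp σ (h :: L) i = foldApp σ L (σ h i) := rfl
lemma foldApp_append (L L' : List ι) (i : α) :
    foldApp σ (L ++ L') i = foldApp σ L' (foldApp σ L i) := List.foldl_append ..

lemma mem_of_foldApp {R : Set α} (hcl : ∀ h, ∀ i ∈ R, σ h i ∈ R) {i : α} (hi : i ∈ R)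
    (L : List ι) : foldApp σ L i ∈ R := by
  induction L generalizing i with
  | nil => exact hi
  | cons h L ih => exact ih (hcl h i hi)

lemma iterate_eq_foldApp (h : ι) (K : ℕ) (i : α) :
    (σ h)^[K] i = foldApp σ (List.replicate K h) i := by
  induction K generalizing i with
  | zero => rfl
  | succ K ih =>
    rw [List.replicate_succ, foldApp_cons, Function.iterate_succ_apply, ih]

lemma foldApp_back [Finite α] (hinj : ∀ h, Function.Injective (σ h)) (h : ι) (i : α) :
    ∃ L : List ι, foldApp σ L (σ h i) = i := by
  have hbij : Function.Bijective (σ h) := Finite.injective_iff_bijective.1 (hinj h)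
  set e : Equiv.Perm α := Equiv.ofBijective _ hbij with he
  have h1 : e ^ orderOf e = 1 := pow_orderOf_eq_one e
  have hpos : 0 < orderOf e := orderOf_pos e
  refine ⟨List.replicate (orderOf e - 1) h, ?_⟩
  rw [← iterate_eq_foldApp]
  have hiter : (σ h)^[orderOf e] i = i := by
    have h3 : (⇑e)^[orderOf e] = id := by rw [← Equiv.Perm.coe_pow, h1]; rfl
    have h4 : ⇑e = σ h := rfl
    rw [← h4, h3]; rfl
  have h5 : orderOf e - 1 + 1 = orderOf e := by omega
  calc (σ h)^[orderOf e - 1] (σ h i) = (σ h)^[orderOf e - 1 + 1] i := by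
        rw [Function.iterate_succ_apply]
    _ = i := by rw [h5]; exact hiter

lemma foldApp_symm [Finite α] (hinj : ∀ h, Function.Injective (σ h)) (L : List ι) (i : α) :
    ∃ L' : List ι, foldApp σ L' (foldApp σ L i) = i := by
  induction L generalizing i with
  | nil => exact ⟨[], rfl⟩
  | cons h L ih =>
    obtain ⟨L1, hL1⟩ := ih (σ h i)
    obtain ⟨L2, hL2⟩ := foldApp_back σ hinj h i
    exact ⟨L1 ++ L2, by rw [foldApp_append, foldApp_cons] at *; rw [hL1, hL2]⟩

end Fold

/-! wordIter basics -/
section WI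
variable {na r : ℕ} [NeZero na] [NeZero r]

lemma wordIter_succ (θ : Fin na → Fin r → Fin na) (k : ℕ) (a : Fin na) (j : ℕ) :
    wordIter θ (k+1) a j
      = wordIter θ k (θ a ⟨(j / r ^ k) % r, Nat.mod_lt _ (NeZero.pos r)⟩) (j % r ^ k) := rfl

lemma wordIter_zero' (θ : Fin na → Fin r → Fin na) (a : Fin na) (j : ℕ) :
    wordIter θ 0 a j = a := rfl

lemma wordIter_one (θ : Fin na → Fin r → Fin na) (a : Fin na) (j : ℕ) (hj : j < r) :
    wordIter θ 1 a j = θ a ⟨j, hj⟩ := by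
  rw [wordIter_succ, wordIter_zero']
  congr 1
  exact Fin.ext (by simp [Nat.mod_eq_of_lt hj])

lemma wordIter_zero_idx (φ : Fin na → Fin r → Fin na)
    (h0 : ∀ b, φ b ⟨0, NeZero.pos r⟩ = b) (k : ℕ) (b : Fin na) : wordIter φ k b 0 = b := by
  induction k generalizing b with
  | zero => rfl
  | succ k ih =>
    rw [wordIter_succ]
    have h1 : (⟨(0 / r ^ k) % r, Nat.mod_lt _ (NeZero.pos r)⟩ : Fin r) = ⟨0, NeZero.pos r⟩ :=
      Fin.ext (by simp)
    rw [h1, h0, Nat.zero_mod, ih]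

lemma wordIter_split (φ : Fin na → Fin r → Fin na) (K : ℕ) (b : Fin na)
    (e u : ℕ) (he : e < r) (hu : u < r ^ K) :
    wordIter φ (K+1) b (e * r ^ K + u) = wordIter φ K (φ b ⟨e, he⟩) u := by
  rw [wordIter_succ]
  have hK : 0 < r ^ K := pow_pos (NeZero.pos r) K
  have h1 : (e * r ^ K + u) / r ^ K = e := by
    rw [mul_comm, Nat.mul_add_div hK, Nat.div_eq_of_lt hu]; omega
  have h2 : (e * r ^ K + u) % r ^ K = u := by
    rw [Nat.mul_add_mod', Nat.mod_eq_of_lt hu]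
  have h3 : (⟨((e * r ^ K + u) / r ^ K) % r, Nat.mod_lt _ (NeZero.pos r)⟩ : Fin r)
      = ⟨e, he⟩ := Fin.ext (by rw [h1]; exact Nat.mod_eq_of_lt he)
  rw [h3, h2]

lemma isSubFix_block {φ : Fin na → Fin r → Fin na} {x : ℤ → Fin na}
    (hx : IsSubFix φ x) : ∀ (k : ℕ) (t : ℤ) (u : ℕ), u < r ^ k →
      x ((r:ℤ) ^ k * t + u) = wordIter φ k (x t) u := by
  intro k
  induction k with
  | zero =>
    intro t u hu
    have hu0 : u = 0 := by simpa using hu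
    subst hu0
    show x _ = x t
    congr 1
    push_cast
    ring
  | succ k ih =>
    intro t u hu
    have hK : 0 < r ^ k := pow_pos (NeZero.pos r) k
    have he : u / r ^ k < r := by
      rw [Nat.div_lt_iff_lt_mul hK, mul_comm]; rwa [pow_succ] at hu
    rw [wordIter_succ]
    have hfin : (⟨(u / r ^ k) % r, Nat.mod_lt _ (NeZero.pos r)⟩ : Fin r) = ⟨u / r ^ k, he⟩ :=
      Fin.ext (Nat.mod_eq_of_lt he)
    rw [hfin]
    have harith : (r:ℤ) ^ (k+1) * t + (u:ℤ) = (r:ℤ) ^ k * ((r:ℤ) * t + (u / r ^ k : ℕ)) + (u % r ^ k : ℕ) := by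
      have hdm : r ^ k * (u / r ^ k) + u % r ^ k = u := Nat.div_add_mod u (r ^ k)
      have h6 : ((r:ℤ))^k * ((u / r ^ k : ℕ):ℤ) + ((u % r ^ k : ℕ):ℤ) = (u:ℤ) := by
        exact_mod_cast hdm
      rw [← h6]
      ring
    rw [harith, ih _ _ (Nat.mod_lt _ hK)]
    congr 1
    exact hx t ⟨u / r ^ k, he⟩

end WI

section Closure
variable {n : ℕ} [NeZero n]

lemma mem_orbitClosure_of_windows (yφ yy : ℤ → Fin n)
    (H : ∀ M : ℕ, ∃ s : ℤ, ∀ t : ℤ, |t| ≤ (M:ℤ) → yy t = yφ (t + s)) :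
    yy ∈ orbitClosure yφ := by
  choose N hN using H
  have htend : Filter.Tendsto (fun M : ℕ => (fun t => yφ (t + N M) : ℤ → Fin n))
      Filter.atTop (nhds yy) := by
    rw [tendsto_pi_nhds]
    intro t
    rw [nhds_discrete, Filter.tendsto_pure]
    filter_upwards [Filter.eventually_ge_atTop (|t|).toNat] with M hM
    exact (hN M t (by rwa [← Int.toNat_le])).symm
  exact mem_closure_of_tendsto htend
    (Filter.Eventually.of_forall fun M => ⟨N M, rfl⟩)

end Closure

end Stmt9Aux


/-- For the map `f : X_φ → ℤ(r)` characterised by basic-block positioning,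
every fiber over a non-integer `z ∈ ℤ(r)` contains exactly `m(θ)` points. Here elements of
the `r`-adic adding machine `ℤ(r)` are encoded as digit sequences `ℕ → Fin r`, and the
integers of `ℤ(r)` are exactly the sequences with a tail of `0`s or a tail of `r-1`s. -/
theorem stmt_9 {na r : ℕ} [NeZero na] [NeZero r] (hr : 2 ≤ r)
    (θ : Fin na → Fin r → Fin na)
    (hadm : AdmissibleSub θ) (hprim : PrimitiveSub θ) (hcf : CoincidenceFreeSub θ)
    (hcan : CanonicalFormSub θ)
    (xh : ℤ → Fin na) (d m : ℕ) (hht : HeightData θ xh d m)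
    (hA : subCondA θ m (orbitClosure xh))
    (n : ℕ) [NeZero n] (c : Fin na × Fin na → Fin n) (φ : Fin n → Fin r → Fin n)
    (hq : QuotientSubData θ m (orbitClosure xh) c φ)
    (yφ : ℤ → Fin n) (hyφ : IsSubFix φ yφ)
    (f : ↥(orbitClosure yφ) → (ℕ → Fin r))
    (hf : ∀ (y : ↥(orbitClosure yφ)) (z : ℕ → Fin r),
      f y = z ↔ ∀ k : ℕ, ∃ b : Fin n, ∀ jj : ℕ, jj < r ^ (k + 1) →
        (y : ℤ → Fin n)
            ((jj : ℤ) - ∑ i ∈ Finset.range (k + 1), ((z i : ℕ) : ℤ) * (r : ℤ) ^ i)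
          = wordIter φ (k + 1) b jj) :
    ∀ z : ℕ → Fin r,
      ¬ ((∃ K : ℕ, ∀ i ≥ K, (z i : ℕ) = 0) ∨ (∃ K : ℕ, ∀ i ≥ K, (z i : ℕ) = r - 1)) →
      {y : ↥(orbitClosure yφ) | f y = z}.ncard = m := by
  intro z hz
  classical
  obtain ⟨hxh, hx0, _, _, hm, _⟩ := hht
  haveI : NeZero m := ⟨hm.ne'⟩
  obtain ⟨hq1, hq2, _, hq4, hq5⟩ := hq
  obtain ⟨hA1, _, hA3⟩ := hA
  have hr1 : (1:ℕ) < r := hr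
  -- class index of a letter
  set clsIdx : Fin na → Fin m := fun a => ⟨(m - subZ θ m a) % m, Nat.mod_lt _ hm⟩ with hclsIdx
  have hzlt : ∀ a, subZ θ m a < m := fun a => Nat.mod_lt _ hm
  have hdvd : ∀ (a : Fin na) (i : Fin m), a ∈ subS θ m i.val ↔ m ∣ subZ θ m a + i.val := by
    intro a i
    constructor
    · intro h
      have h2 : (m:ℤ) ∣ (-(i.val:ℤ)) - (subZ θ m a : ℤ) := Int.ModEq.dvd h
      have h3 : (m:ℤ) ∣ ((subZ θ m a + i.val : ℕ) : ℤ) := by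
        push_cast
        have := (dvd_neg.2 h2)
        convert this using 1
        exacts [rfl, by ring]
      exact_mod_cast h3
    · intro h
      have h2 : (m:ℤ) ∣ ((subZ θ m a + i.val : ℕ) : ℤ) := Int.natCast_dvd_natCast.2 h
      show Int.ModEq _ _ _
      rw [Int.modEq_iff_dvd]
      have := dvd_neg.2 h2
      convert this using 1
      push_cast
      exacts [rfl, by push_cast; ring]
  have memS : ∀ a : Fin na, a ∈ subS θ m (clsIdx a).val := by
    intro a
    rw [hdvd]
    show m ∣ subZ θ m a + (m - subZ θ m a) % m
    rcases Nat.eq_zero_or_pos (subZ θ m a) with h | h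
    · simp [h]
    · have h2 : (m - subZ θ m a) % m = m - subZ θ m a := Nat.mod_eq_of_lt (by have := hzlt a; omega)
      rw [h2]
      have h3 : subZ θ m a + (m - subZ θ m a) = m := by have := hzlt a; omega
      rw [h3]
  have uniqS : ∀ (a : Fin na) (i : Fin m), a ∈ subS θ m i.val → i = clsIdx a := by
    intro a i hi
    have h1 := (hdvd a i).1 hi
    have h2 := (hdvd a (clsIdx a)).1 (memS a)
    apply Fin.ext
    have h3 : (i:ℕ) ≡ ((clsIdx a : Fin m) : ℕ) [MOD m] :=
      Nat.ModEq.add_left_cancel' (subZ θ m a)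
        ((Nat.modEq_zero_iff_dvd.2 h1).trans (Nat.modEq_zero_iff_dvd.2 h2).symm)
    have h4 : (i:ℕ) % m = ((clsIdx a : Fin m) : ℕ) % m := h3
    rwa [Nat.mod_eq_of_lt i.isLt, Nat.mod_eq_of_lt (clsIdx a).isLt] at h4
  -- nonemptiness of the S classes
  have hP1cls : ∀ (i : Fin m) (h : ℕ), 1 ≤ h → h < r → subP θ m i.val (h-1) 1 ∈ subClasses θ m := by
    intro i h h1 hh
    exact ⟨i.val, i.isLt, 1, le_rfl, h - 1, by rw [pow_one]; omega, rfl⟩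
  have hSne : ∀ i : Fin m, ∃ p, p ∈ subS θ m i.val := by
    intro i
    obtain ⟨ab, hab⟩ := hA1 _ (hP1cls i 1 le_rfl hr1)
    obtain ⟨p, hp, _⟩ := hab
    exact ⟨p, hp⟩
  have hcol : ∀ (h : Fin r), Function.Injective (fun p => θ p h) := by
    intro h p q hpq
    by_contra hne
    exact hcf p q hne h hpq
  have hcan0 : ∀ a, θ a ⟨0, NeZero.pos r⟩ = a := fun a => (hcan a).1
  -- every letter occurs in xh at a nonnegative position
  have hocc : ∀ a : Fin na, ∃ P : ℕ, xh (P : ℤ) = a := by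
    intro a
    obtain ⟨k, hk⟩ := hprim
    obtain ⟨j, hj, hja⟩ := hk (xh 0) a
    refine ⟨j, ?_⟩
    have := Stmt9Aux.isSubFix_block hxh k 0 j hj
    rw [mul_zero, zero_add] at this
    rw [this, hja]
  have hlegalθ : ∀ (a : Fin na) (h : ℕ) (h1 : 1 ≤ h) (hh : h < r),
      (θ a ⟨h-1, lt_of_le_of_lt (Nat.sub_le h 1) hh⟩, θ a ⟨h, hh⟩)
        ∈ legalPairs (orbitClosure xh) := by
    intro a h h1 hh
    obtain ⟨P, hP⟩ := hocc a
    refine ⟨xh, self_mem_orbitClosure xh, (r:ℤ) * P + (h - 1 : ℕ), ?_, ?_⟩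
    · have := hxh (P:ℤ) ⟨h-1, lt_of_le_of_lt (Nat.sub_le h 1) hh⟩
      rw [hP] at this
      exact this
    · have := hxh (P:ℤ) ⟨h, hh⟩
      rw [hP] at this
      rw [← this]
      congr 1
      have : ((h - 1 : ℕ) : ℤ) + 1 = (h : ℤ) := by omega
      push_cast
      omega
  have hmemP1 : ∀ (i : Fin m) (p : Fin na), p ∈ subS θ m i.val → ∀ (h : ℕ) (h1 : 1 ≤ h) (hh : h < r),
      (θ p ⟨h-1, lt_of_le_of_lt (Nat.sub_le h 1) hh⟩, θ p ⟨h, hh⟩) ∈ subP θ m i.val (h-1) 1 := by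
    intro i p hp h h1 hh
    refine ⟨p, hp, ?_⟩
    rw [Stmt9Aux.wordIter_one θ p (h-1) (lt_of_le_of_lt (Nat.sub_le h 1) hh),
      show h - 1 + 1 = h by omega, Stmt9Aux.wordIter_one θ p h hh]
  -- exact image property: columns permute the S classes
  have hsig : ∀ (h : Fin r) (i : Fin m), ∃ i' : Fin m,
      ∀ q : Fin na, (∃ p ∈ subS θ m i.val, θ p h = q) ↔ q ∈ subS θ m i'.val := by
    intro h i
    obtain ⟨p₀, hp₀⟩ := hSne i
    refine ⟨clsIdx (θ p₀ h), ?_⟩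
    have hwi2 : ∀ p : Fin na, wordIter θ 2 p (r * h.val) = θ p h ∧
        wordIter θ 2 p (r * h.val + 1) = θ (θ p h) ⟨1, hr1⟩ := by
      intro p
      constructor
      · have h0r : (0:ℕ) < r ^ 1 := by rw [pow_one]; exact NeZero.pos r
        have := Stmt9Aux.wordIter_split θ 1 p h.val 0 h.isLt h0r
        rw [show h.val * r ^ 1 + 0 = r * h.val by rw [pow_one]; ring] at this
        rw [this, Stmt9Aux.wordIter_one θ _ 0 (NeZero.pos r), Fin.eta, hcan0]
      · have h1r : (1:ℕ) < r ^ 1 := by rw [pow_one]; exact hr1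
        have := Stmt9Aux.wordIter_split θ 1 p h.val 1 h.isLt h1r
        rw [show h.val * r ^ 1 + 1 = r * h.val + 1 by rw [pow_one]; ring] at this
        rw [this, Stmt9Aux.wordIter_one θ _ 1 hr1, Fin.eta]
    have hC1 : subP θ m i.val (r * h.val) 2 ∈ subClasses θ m := by
      refine ⟨i.val, i.isLt, 2, by omega, r * h.val, ?_, rfl⟩
      have h1 : h.val ≤ r - 1 := by have := h.isLt; omega
      have h2 : r * h.val ≤ r * (r - 1) := Nat.mul_le_mul_left _ h1
      have h3 : r * (r - 1) + 2 ≤ r ^ 2 := by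
        rcases r with _ | _ | r'
        · omega
        · omega
        · simp only [pow_two, Nat.succ_sub_one]
          ring_nf
          omega
      omega
    have hC2 : subP θ m (clsIdx (θ p₀ h)).val 0 1 ∈ subClasses θ m := by
      have := hP1cls (clsIdx (θ p₀ h)) 1 le_rfl hr1
      simpa using this
    have hC1elt : ∀ p : Fin na, p ∈ subS θ m i.val →
        (θ p h, θ (θ p h) ⟨1, hr1⟩) ∈ subP θ m i.val (r * h.val) 2 := by
      intro p hp
      exact ⟨p, hp, by rw [(hwi2 p).1, (hwi2 p).2]⟩
    have hC2elt : ∀ q : Fin na, q ∈ subS θ m (clsIdx (θ p₀ h)).val →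
        (q, θ q ⟨1, hr1⟩) ∈ subP θ m (clsIdx (θ p₀ h)).val 0 1 := by
      intro q hq
      refine ⟨q, hq, ?_⟩
      rw [Stmt9Aux.wordIter_one θ q 0 (NeZero.pos r), zero_add,
        Stmt9Aux.wordIter_one θ q 1 hr1, hcan0]
    have heq : subP θ m i.val (r * h.val) 2 = subP θ m (clsIdx (θ p₀ h)).val 0 1 := by
      rcases hA3 _ hC1 _ hC2 with he | hdis
      · exact he
      · exfalso
        exact Set.disjoint_left.1 hdis (hC1elt p₀ hp₀) (hC2elt _ (memS (θ p₀ h)))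
    intro q
    constructor
    · rintro ⟨p, hp, rfl⟩
      have := heq ▸ hC1elt p hp
      obtain ⟨p', hp', hpair⟩ := this
      rw [Stmt9Aux.wordIter_one θ p' 0 (NeZero.pos r), zero_add,
        Stmt9Aux.wordIter_one θ p' 1 hr1, hcan0] at hpair
      have hq1 : θ p h = p' := congrArg Prod.fst hpair
      rw [hq1]; exact hp'
    · intro hq
      have := heq.symm ▸ hC2elt q hq
      obtain ⟨p, hp, hpair⟩ := this
      rw [(hwi2 p).1, (hwi2 p).2] at hpair
      exact ⟨p, hp, (congrArg Prod.fst hpair).symm⟩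
  choose sigma hsigma using hsig
  have hsig_mem : ∀ (h : Fin r) (i : Fin m) (p : Fin na), p ∈ subS θ m i.val →
      θ p h ∈ subS θ m (sigma h i).val := fun h i p hp => (hsigma h i _).1 ⟨p, hp, rfl⟩
  have hsig_inj : ∀ h : Fin r, Function.Injective (sigma h) := by
    intro h i i' hii
    obtain ⟨p, hp⟩ := hSne i
    have h1 : θ p h ∈ subS θ m (sigma h i').val := hii ▸ hsig_mem h i p hp
    obtain ⟨p', hp', hpp⟩ := (hsigma h i' _).2 h1
    have : p' = p := hcol h hpp
    subst this
    rw [uniqS p' i hp, uniqS p' i' hp']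
  have hsig_zero : ∀ i : Fin m, sigma ⟨0, NeZero.pos r⟩ i = i := by
    intro i
    obtain ⟨p, hp⟩ := hSne i
    have h1 : θ p ⟨0, NeZero.pos r⟩ ∈ subS θ m (sigma ⟨0, NeZero.pos r⟩ i).val :=
      hsig_mem _ i p hp
    rw [hcan0] at h1
    rw [uniqS p _ h1, ← uniqS p i hp]
  -- representatives and the pair-class value cval
  choose rep hrep using hSne
  set cval : Fin m → ℕ → Fin n := fun i h =>
    c (θ (rep i) ⟨(h-1) % r, Nat.mod_lt _ (NeZero.pos r)⟩,
       θ (rep i) ⟨h % r, Nat.mod_lt _ (NeZero.pos r)⟩) with hcvaldef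
  have cval_eq : ∀ (i : Fin m) (h : ℕ) (h1 : 1 ≤ h) (hh : h < r),
      cval i h = c (θ (rep i) ⟨h-1, lt_of_le_of_lt (Nat.sub_le h 1) hh⟩, θ (rep i) ⟨h, hh⟩) := by
    intro i h h1 hh
    have e1 : (⟨(h-1) % r, Nat.mod_lt _ (NeZero.pos r)⟩ : Fin r)
        = ⟨h-1, lt_of_le_of_lt (Nat.sub_le h 1) hh⟩ := Fin.ext (Nat.mod_eq_of_lt (by omega))
    have e2 : (⟨h % r, Nat.mod_lt _ (NeZero.pos r)⟩ : Fin r) = ⟨h, hh⟩ :=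
      Fin.ext (Nat.mod_eq_of_lt hh)
    show c (θ (rep i) ⟨(h-1) % r, Nat.mod_lt _ (NeZero.pos r)⟩,
      θ (rep i) ⟨h % r, Nat.mod_lt _ (NeZero.pos r)⟩) = _
    rw [e1, e2]
  have hcval : ∀ (i : Fin m) (h : ℕ) (h1 : 1 ≤ h) (hh : h < r) (a : Fin na),
      a ∈ subS θ m i.val →
      c (θ a ⟨h-1, lt_of_le_of_lt (Nat.sub_le h 1) hh⟩, θ a ⟨h, hh⟩) = cval i h := by
    intro i h h1 hh a ha
    rw [cval_eq i h h1 hh]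
    exact (hq2 _ (hlegalθ a h h1 hh) _ (hlegalθ (rep i) h h1 hh)).2
      ⟨subP θ m i.val (h-1) 1, hP1cls i h h1 hh, hmemP1 i a ha h h1 hh,
        hmemP1 i (rep i) (hrep i) h h1 hh⟩
  have hcvalinj : ∀ (h : ℕ) (h1 : 1 ≤ h) (hh : h < r) (i i' : Fin m),
      cval i h = cval i' h → i = i' := by
    intro h h1 hh i i' hcc
    rw [cval_eq i h h1 hh, cval_eq i' h h1 hh] at hcc
    obtain ⟨C, hC, m1, m2⟩ :=
      (hq2 _ (hlegalθ (rep i) h h1 hh) _ (hlegalθ (rep i') h h1 hh)).1 hcc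
    have e1 : C = subP θ m i.val (h-1) 1 := by
      rcases hA3 _ hC _ (hP1cls i h h1 hh) with he | hdis
      · exact he
      · exact absurd (hmemP1 i (rep i) (hrep i) h h1 hh) (Set.disjoint_left.1 hdis m1)
    have e2 : C = subP θ m i'.val (h-1) 1 := by
      rcases hA3 _ hC _ (hP1cls i' h h1 hh) with he | hdis
      · exact he
      · exact absurd (hmemP1 i' (rep i') (hrep i') h h1 hh) (Set.disjoint_left.1 hdis m2)
    have m1' := m1
    rw [e2] at m1'
    obtain ⟨p', hp', hpair⟩ := m1'
    rw [Stmt9Aux.wordIter_one θ p' (h-1) (lt_of_le_of_lt (Nat.sub_le h 1) hh),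
      show h - 1 + 1 = h by omega, Stmt9Aux.wordIter_one θ p' h hh] at hpair
    have hsnd : θ (rep i) ⟨h, hh⟩ = θ p' ⟨h, hh⟩ := congrArg Prod.snd hpair
    have : rep i = p' := hcol _ hsnd
    subst this
    rw [uniqS (rep i) i' hp', ← uniqS (rep i) i (hrep i)]
  -- the class of the last letters of representatives of a letter of B
  have hνex : ∀ b : Fin n, ∃ i : Fin m, ∀ ab ∈ legalPairs (orbitClosure xh),
      c ab = b → ab.2 ∈ subS θ m i.val := by
    intro b
    obtain ⟨ab₀, hab₀l, hab₀c⟩ := hq1 b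
    refine ⟨clsIdx ab₀.2, ?_⟩
    intro ab habl habc
    have e1 := hq5 b ab habl habc 1 le_rfl hr1
    have e0 := hq5 b ab₀ hab₀l hab₀c 1 le_rfl hr1
    rw [hcval (clsIdx ab.2) 1 le_rfl hr1 ab.2 (memS ab.2)] at e1
    rw [hcval (clsIdx ab₀.2) 1 le_rfl hr1 ab₀.2 (memS ab₀.2)] at e0
    have : clsIdx ab.2 = clsIdx ab₀.2 := hcvalinj 1 le_rfl hr1 _ _ (e1.symm.trans e0)
    rw [← this] at *
    exact memS ab.2
  choose ν hν using hνex
  have hφeq : ∀ (b : Fin n) (h : ℕ) (h1 : 1 ≤ h) (hh : h < r),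
      φ b ⟨h, hh⟩ = cval (ν b) h := by
    intro b h h1 hh
    obtain ⟨ab, habl, habc⟩ := hq1 b
    rw [hq5 b ab habl habc h h1 hh, hcval (ν b) h h1 hh ab.2 (hν b ab habl habc)]
  have hνcval : ∀ (i : Fin m) (h : ℕ) (h1 : 1 ≤ h) (hh : h < r),
      ν (cval i h) = sigma ⟨h, hh⟩ i := by
    intro i h h1 hh
    have hpl := hlegalθ (rep i) h h1 hh
    have hpc := hcval i h h1 hh (rep i) (hrep i)
    have h4 := hν (cval i h) _ hpl hpc
    have h5 := hsig_mem ⟨h, hh⟩ i (rep i) (hrep i)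
    simp only at h4
    rw [uniqS _ _ h4, ← uniqS _ _ h5]
  -- reachability of every class
  set Iidx : ℕ → Fin m := fun p => clsIdx (xh (p:ℤ)) with hIidxdef
  have hIstep : ∀ p : ℕ, Iidx p = sigma ⟨p % r, Nat.mod_lt _ (NeZero.pos r)⟩ (Iidx (p / r)) := by
    intro p
    have hsplit : xh (p:ℤ) = θ (xh ((p / r : ℕ):ℤ)) ⟨p % r, Nat.mod_lt _ (NeZero.pos r)⟩ := by
      have h7' : xh ((r:ℤ) * ((p/r : ℕ):ℤ) + ((p % r : ℕ) : ℤ))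
          = θ (xh ((p/r : ℕ):ℤ)) ⟨p % r, Nat.mod_lt _ (NeZero.pos r)⟩ :=
        hxh ((p / r : ℕ):ℤ) ⟨p % r, Nat.mod_lt _ (NeZero.pos r)⟩
      rw [← h7']
      congr 1
      have h8 : (r * (p/r) + p % r : ℕ) = p := Nat.div_add_mod p r
      exact_mod_cast (congrArg (fun x : ℕ => (x:ℤ)) h8).symm
    have h6 : xh (p:ℤ) ∈ subS θ m (sigma ⟨p % r, Nat.mod_lt _ (NeZero.pos r)⟩ (Iidx (p / r))).val := by
      rw [hsplit]
      exact hsig_mem _ _ _ (memS _)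
    exact (uniqS _ _ h6).symm
  have hreachIdx : ∀ p : ℕ, ∃ L : List (Fin r), Stmt9Aux.foldApp sigma L (Iidx 0) = Iidx p := by
    intro p
    induction p using Nat.strong_induction_on with
    | _ p ih =>
      rcases Nat.eq_zero_or_pos p with h0 | h0
      · exact ⟨[], by rw [h0]; rfl⟩
      · obtain ⟨L, hL⟩ := ih (p / r) (Nat.div_lt_self h0 hr1)
        refine ⟨L ++ [⟨p % r, Nat.mod_lt _ (NeZero.pos r)⟩], ?_⟩
        rw [Stmt9Aux.foldApp_append, hL, Stmt9Aux.foldApp_cons, Stmt9Aux.foldApp_nil,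
          ← hIstep p]
  have hIsurj : ∀ i : Fin m, ∃ p : ℕ, Iidx p = i := by
    intro i
    obtain ⟨P, hP⟩ := hocc (rep i)
    refine ⟨P, ?_⟩
    show clsIdx (xh (P:ℤ)) = i
    rw [hP, ← uniqS (rep i) i (hrep i)]
  have hreach : ∀ i i' : Fin m, ∃ L : List (Fin r), Stmt9Aux.foldApp sigma L i = i' := by
    have B1 : ∀ i : Fin m, ∃ L, Stmt9Aux.foldApp sigma L (Iidx 0) = i := by
      intro i
      obtain ⟨p, hp⟩ := hIsurj i
      obtain ⟨L, hL⟩ := hreachIdx p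
      exact ⟨L, by rw [hL, hp]⟩
    have B2 : ∀ i : Fin m, ∃ L, Stmt9Aux.foldApp sigma L i = Iidx 0 := by
      intro i
      obtain ⟨L1, hL1⟩ := B1 i
      obtain ⟨L', hL'⟩ := Stmt9Aux.foldApp_symm sigma hsig_inj L1 (Iidx 0)
      rw [hL1] at hL'
      exact ⟨L', hL'⟩
    intro i i'
    obtain ⟨L2, hL2⟩ := B2 i
    obtain ⟨L3, hL3⟩ := B1 i'
    exact ⟨L2 ++ L3, by rw [Stmt9Aux.foldApp_append, hL2, hL3]⟩
  -- every class is realized among the letters of yφ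
  have hRcl : ∀ (h : Fin r), ∀ i ∈ {i : Fin m | ∃ t : ℤ, ν (yφ t) = i},
      sigma h i ∈ {i : Fin m | ∃ t : ℤ, ν (yφ t) = i} := by
    intro h i hi
    obtain ⟨t, ht⟩ := hi
    rcases Nat.eq_zero_or_pos h.val with h0 | h0
    · have : h = ⟨0, NeZero.pos r⟩ := Fin.ext h0
      rw [this, hsig_zero i]
      exact ⟨t, ht⟩
    · refine ⟨r * t + h.val, ?_⟩
      have h8 : yφ (r * t + (h.val:ℤ)) = φ (yφ t) h := hyφ t h
      rw [h8]
      have h9 : φ (yφ t) h = cval (ν (yφ t)) h.val := by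
        rw [← hφeq (yφ t) h.val h0 h.isLt]
      rw [h9, hνcval _ _ h0 h.isLt, ht]
  have hreal : ∀ i : Fin m, ∃ t : ℤ, ν (yφ t) = i := by
    intro i
    obtain ⟨L, hL⟩ := hreach (ν (yφ 0)) i
    have := Stmt9Aux.mem_of_foldApp sigma hRcl
      (show ν (yφ 0) ∈ {i : Fin m | ∃ t : ℤ, ν (yφ t) = i} from ⟨0, rfl⟩) L
    rw [hL] at this
    exact this
  have hletter : ∀ (i : Fin m) (h : ℕ) (h1 : 1 ≤ h) (hh : h < r), ∃ t : ℤ, yφ t = cval i h := by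
    intro i h h1 hh
    obtain ⟨t, ht⟩ := hreal i
    refine ⟨r * t + h, ?_⟩
    have h8 : yφ (r * t + ((⟨h, hh⟩ : Fin r) : ℕ)) = φ (yφ t) ⟨h, hh⟩ := hyφ t ⟨h, hh⟩
    have h8' : yφ (r * t + (h:ℤ)) = φ (yφ t) ⟨h, hh⟩ := h8
    rw [h8', hφeq (yφ t) h h1 hh, ht]
  -- digit arithmetic for the non-integer z
  push_neg at hz
  obtain ⟨hz0, hzr⟩ := hz
  set sZ : ℕ → ℕ := fun k => ∑ i ∈ Finset.range (k+1), (z i).val * r ^ i with hsZdef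
  have hsZcast : ∀ k, ((sZ k : ℕ) : ℤ) = ∑ i ∈ Finset.range (k+1), ((z i : ℕ) : ℤ) * (r:ℤ) ^ i := by
    intro k
    rw [hsZdef]
    push_cast
    rfl
  have hsZsucc : ∀ k, sZ (k+1) = sZ k + (z (k+1)).val * r ^ (k+1) := by
    intro k
    rw [hsZdef]
    exact Finset.sum_range_succ _ _
  have hsZ0 : sZ 0 = (z 0).val := by
    rw [hsZdef]
    simp
  have hstep1 : ∀ (k x e : ℕ), x < r ^ (k+1) → e ≤ r - 1 → x + e * r ^ (k+1) < r ^ (k+2) := by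
    intro k x e hx he
    have h2 : e * r ^ (k+1) ≤ (r-1) * r ^ (k+1) := Nat.mul_le_mul_right _ he
    have h4 : 1 + (r-1) = r := by omega
    have h3 : r ^ (k+1) + (r-1) * r ^ (k+1) = r ^ (k+2) := by
      calc r ^ (k+1) + (r-1) * r ^ (k+1) = (1 + (r-1)) * r ^ (k+1) := by ring
        _ = r * r ^ (k+1) := by rw [h4]
        _ = r ^ (k+2) := by ring
    omega
  have hsZlt : ∀ k, sZ k < r ^ (k+1) := by
    intro k
    induction k with
    | zero =>
      rw [hsZ0, pow_one]
      exact (z 0).isLt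
    | succ k ih =>
      rw [hsZsucc k]
      exact hstep1 k _ _ ih (by have := (z (k+1)).isLt; omega)
  have hpow : ∀ M i : ℕ, M ≤ i → M < r ^ i := by
    intro M i hMi
    calc M < 2 ^ M := M.lt_two_pow_self
      _ ≤ 2 ^ i := Nat.pow_le_pow_right (by norm_num) hMi
      _ ≤ r ^ i := Nat.pow_le_pow_left hr i
  have hg1 : ∀ M : ℕ, ∃ K, ∀ k, K ≤ k → M ≤ sZ k := by
    intro M
    obtain ⟨i, hiM, hine⟩ := hz0 M
    refine ⟨i, fun k hk => ?_⟩
    have hmem : i ∈ Finset.range (k+1) := Finset.mem_range.2 (by omega)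
    have h1 : (z i).val * r ^ i ≤ sZ k := by
      rw [hsZdef]
      exact Finset.single_le_sum (f := fun i => (z i).val * r ^ i) (fun _ _ => Nat.zero_le _) hmem
    have h2 : r ^ i ≤ (z i).val * r ^ i := Nat.le_mul_of_pos_left (r ^ i) (Nat.pos_of_ne_zero hine)
    have h3 : M < r ^ i := hpow M i hiM
    omega
  have hg2aux : ∀ k i, i ≤ k → (z i).val ≤ r - 2 → sZ k + r ^ i < r ^ (k+1) := by
    intro k
    induction k with
    | zero =>
      intro i hi hile
      have h0 : i = 0 := by omega
      subst h0
      rw [hsZ0, pow_zero, pow_one]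
      omega
    | succ k ih =>
      intro i hi hile
      have hso : r ^ (k + 1 + 1) = r ^ (k + 2) := by norm_num
      rcases Nat.lt_or_ge i (k+1) with h | h
      · have hA := ih i (by omega) hile
        rw [hsZsucc k]
        have hB := hstep1 k (sZ k + r ^ i) (z (k+1)).val hA (by have := (z (k+1)).isLt; omega)
        omega
      · have h0 : i = k + 1 := by omega
        subst h0
        rw [hsZsucc k]
        have h5 : (z (k+1)).val * r ^ (k+1) + r ^ (k+1) = ((z (k+1)).val + 1) * r ^ (k+1) := by ring
        have h6 : ((z (k+1)).val + 1) * r ^ (k+1) ≤ (r-1) * r ^ (k+1) :=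
          Nat.mul_le_mul_right _ (by omega)
        have h7 := hstep1 k (sZ k) (r-1) (hsZlt k) le_rfl
        omega
  have hg2 : ∀ M : ℕ, ∃ K, ∀ k, K ≤ k → sZ k + M < r ^ (k+1) := by
    intro M
    obtain ⟨i, hiM, hine⟩ := hzr M
    have hle : (z i).val ≤ r - 2 := by have := (z i).isLt; omega
    refine ⟨i, fun k hk => ?_⟩
    have h2 := hg2aux k i hk hle
    have h3 : M < r ^ i := hpow M i hiM
    omega
  have hcover : ∀ t : ℤ, ∃ K, ∀ k, K ≤ k →
      0 ≤ t + (sZ k : ℤ) ∧ (t + (sZ k : ℤ)).toNat < r ^ (k+1) := by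
    intro t
    obtain ⟨K1, h1⟩ := hg1 t.natAbs
    obtain ⟨K2, h2⟩ := hg2 (t.natAbs + 1)
    refine ⟨max K1 K2, fun k hk => ?_⟩
    have g1 := h1 k (le_trans (le_max_left _ _) hk)
    have g2 := h2 k (le_trans (le_max_right _ _) hk)
    omega
  -- next nonzero digit
  have hnxtex : ∀ k : ℕ, ∃ j, k ≤ j ∧ (z (j+1)).val ≠ 0 := by
    intro k
    obtain ⟨i, hik, hine⟩ := hz0 (k+1)
    exact ⟨i - 1, by omega, by rwa [show i - 1 + 1 = i by omega]⟩
  set nxt : ℕ → ℕ := fun k => Nat.find (hnxtex k) with hnxtdef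
  have hnxt_ge : ∀ k, k ≤ nxt k := fun k => (Nat.find_spec (hnxtex k)).1
  have hnxt_nz : ∀ k, (z (nxt k + 1)).val ≠ 0 := fun k => (Nat.find_spec (hnxtex k)).2
  have hnxt_min : ∀ k j, k ≤ j → j < nxt k → (z (j+1)).val = 0 := by
    intro k j hkj hlt
    by_contra hne
    have h9 : nxt k ≤ j := Nat.find_min' (hnxtex k) (⟨hkj, hne⟩ : k ≤ j ∧ (z (j+1)).val ≠ 0)
    omega
  have hnxt_zero : ∀ k, (z (k+1)).val = 0 → nxt k = nxt (k+1) := by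
    intro k h0
    have ha : k + 1 ≤ nxt k := by
      rcases Nat.eq_or_lt_of_le (hnxt_ge k) with he | hlt
      · exfalso; exact hnxt_nz k (by rw [← he]; exact h0)
      · omega
    apply Nat.le_antisymm
    · exact Nat.find_min' (hnxtex k) ⟨by have := hnxt_ge (k+1); omega, hnxt_nz (k+1)⟩
    · exact Nat.find_min' (hnxtex (k+1)) ⟨ha, hnxt_nz k⟩
  have hnxt_self : ∀ k, (z (k+1)).val ≠ 0 → nxt k = k :=
    fun k h => Nat.le_antisymm (Nat.find_min' (hnxtex k) ⟨le_rfl, h⟩) (hnxt_ge k)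
  -- block property defining the fiber
  have hWI0 : ∀ (k : ℕ) (b : Fin n), wordIter φ k b 0 = b :=
    fun k b => Stmt9Aux.wordIter_zero_idx φ hq4 k b
  set BP : (ℤ → Fin n) → Prop := fun y => ∀ (k jj : ℕ), jj < r ^ (k+1) →
      y ((jj:ℤ) - (sZ k:ℤ)) = wordIter φ (k+1) (y (-(sZ k:ℤ))) jj with hBPdef
  have hmem_iff : ∀ y : ↥(orbitClosure yφ), f y = z ↔ BP (y : ℤ → Fin n) := by
    intro y
    rw [hf y z, hBPdef]
    have hrw : ∀ (k : ℕ) (b : Fin n), (∀ jj : ℕ, jj < r ^ (k + 1) →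
        (y : ℤ → Fin n) ((jj:ℤ) - ∑ i ∈ Finset.range (k + 1), ((z i : ℕ) : ℤ) * (r:ℤ) ^ i)
          = wordIter φ (k+1) b jj) ↔ (∀ jj : ℕ, jj < r ^ (k + 1) →
        (y : ℤ → Fin n) ((jj:ℤ) - (sZ k : ℤ)) = wordIter φ (k+1) b jj) := by
      intro k b
      rw [hsZcast k]
    constructor
    · intro H k jj hjj
      obtain ⟨b, hb⟩ := H k
      rw [hrw k b] at hb
      have hb0 := hb 0 (pow_pos (NeZero.pos r) _)
      rw [hWI0] at hb0
      have h0 : ((0:ℕ):ℤ) - (sZ k:ℤ) = -(sZ k:ℤ) := by push_cast; ring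
      rw [h0] at hb0
      rw [← hb0] at hb
      exact hb jj hjj
    · intro H k
      refine ⟨(y : ℤ → Fin n) (-(sZ k:ℤ)), ?_⟩
      rw [hrw]
      exact H k
  -- the chain of block letters
  have hchain : ∀ y, BP y → ∀ k, y (-(sZ k:ℤ)) = φ (y (-(sZ (k+1):ℤ))) (z (k+1)) := by
    intro y hy k
    have hso : r ^ (k+1+1) = r ^ (k+2) := rfl
    have hjj : (z (k+1)).val * r ^ (k+1) < r ^ (k+1+1) := by
      have h6 : ((z (k+1)).val) * r ^ (k+1) ≤ (r-1) * r^(k+1) :=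
        Nat.mul_le_mul_right _ (by have := (z (k+1)).isLt; omega)
      have h7 := hstep1 k 0 (r-1) (pow_pos (NeZero.pos r) _) le_rfl
      omega
    have hb := hy (k+1) ((z (k+1)).val * r ^ (k+1)) hjj
    have hpos : ((((z (k+1)).val * r ^ (k+1) : ℕ)):ℤ) - (sZ (k+1) : ℤ) = -(sZ k : ℤ) := by
      rw [hsZsucc k]
      push_cast
      ring
    rw [hpos] at hb
    have hsplit : wordIter φ (k+1+1) (y (-(sZ (k+1):ℤ))) ((z (k+1)).val * r ^ (k+1))
        = φ (y (-(sZ (k+1):ℤ))) (z (k+1)) := by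
      have h8 := Stmt9Aux.wordIter_split φ (k+1) (y (-(sZ (k+1):ℤ))) ((z (k+1)).val) 0
        (z (k+1)).isLt (pow_pos (NeZero.pos r) _)
      rw [add_zero] at h8
      rw [h8, hWI0]
    rw [hsplit] at hb
    exact hb
  -- every position is determined by the block letters
  have hdet : ∀ y, BP y → ∀ (t : ℤ) (k : ℕ), 0 ≤ t + (sZ k:ℤ) → (t + (sZ k:ℤ)).toNat < r ^ (k+1) →
      y t = wordIter φ (k+1) (y (-(sZ k:ℤ))) (t + (sZ k:ℤ)).toNat := by
    intro y hy t k h1 h2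
    have h3 := hy k (t + (sZ k:ℤ)).toNat h2
    rw [show (((t + (sZ k:ℤ)).toNat : ℕ):ℤ) - (sZ k:ℤ) = t by omega] at h3
    exact h3
  -- the induced chain of classes
  have homega : ∀ y, BP y → ∀ k,
      ν (y (-(sZ k:ℤ))) = sigma (z (k+1)) (ν (y (-(sZ (k+1):ℤ)))) := by
    intro y hy k
    rcases Nat.eq_zero_or_pos (z (k+1)).val with h0 | h0
    · have hz0' : z (k+1) = ⟨0, NeZero.pos r⟩ := Fin.ext h0
      rw [hchain y hy k, hz0', hq4, hsig_zero]
    · have heta : z (k+1) = ⟨(z (k+1)).val, (z (k+1)).isLt⟩ := rfl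
      rw [hchain y hy k, heta, hφeq _ _ h0 (z (k+1)).isLt, hνcval _ _ h0 (z (k+1)).isLt]
  -- the block letter at level k is recovered from the class chain
  have hconsty : ∀ y, BP y → ∀ d km, (∀ l, km ≤ l → l < km + d → (z (l+1)).val = 0) →
      y (-(sZ (km + d):ℤ)) = y (-(sZ km:ℤ)) := by
    intro y hy d
    induction d with
    | zero => intro km _; rfl
    | succ d ih =>
      intro km hzz
      have h1 : y (-(sZ (km + d):ℤ)) = y (-(sZ km:ℤ)) := ih km (fun l hl hld => hzz l hl (by omega))
      have h2 : (z (km + d + 1)).val = 0 := hzz (km + d) (by omega) (by omega)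
      have h3 := hchain y hy (km + d)
      rw [show z (km + d + 1) = ⟨0, NeZero.pos r⟩ from Fin.ext h2, hq4] at h3
      rw [show km + (d+1) = km + d + 1 by ring, ← h3, h1]
  have hbdet : ∀ y, BP y → ∀ k,
      y (-(sZ k:ℤ)) = cval (ν (y (-(sZ (nxt k + 1):ℤ)))) ((z (nxt k + 1)).val) := by
    intro y hy k
    have h4 : y (-(sZ k:ℤ)) = y (-(sZ (nxt k):ℤ)) := by
      obtain ⟨d, hd⟩ : ∃ d, nxt k = k + d := ⟨nxt k - k, by have := hnxt_ge k; omega⟩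
      rw [hd]
      exact (hconsty y hy d k (fun l hl hld => hnxt_min k l hl (by omega))).symm
    have h5 := hchain y hy (nxt k)
    have h0 := hnxt_nz k
    rw [h4, h5, show z (nxt k + 1) = ⟨(z (nxt k + 1)).val, (z (nxt k + 1)).isLt⟩ from rfl,
      hφeq _ _ (Nat.pos_of_ne_zero h0) (z (nxt k + 1)).isLt]
  -- injectivity on the fiber
  have hωdet : ∀ y y', BP y → BP y' → ν (y (-(sZ 0:ℤ))) = ν (y' (-(sZ 0:ℤ))) →
      ∀ k, ν (y (-(sZ k:ℤ))) = ν (y' (-(sZ k:ℤ))) := by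
    intro y y' hy hy' h0 k
    induction k with
    | zero => exact h0
    | succ k ih =>
      have e1 := homega y hy k
      have e2 := homega y' hy' k
      exact hsig_inj (z (k+1)) (by rw [← e1, ← e2, ih])
  have hinj : ∀ y y', BP y → BP y' → ν (y (-(sZ 0:ℤ))) = ν (y' (-(sZ 0:ℤ))) → y = y' := by
    intro y y' hy hy' h0
    funext t
    obtain ⟨K, hK⟩ := hcover t
    have h1 := hdet y hy t K (hK K le_rfl).1 (hK K le_rfl).2
    have h2 := hdet y' hy' t K (hK K le_rfl).1 (hK K le_rfl).2
    rw [h1, h2]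
    refine congrArg (fun b => wordIter φ (K+1) b ((t + (sZ K:ℤ)).toNat)) ?_
    rw [hbdet y hy K, hbdet y' hy' K]
    exact congrArg (fun w => cval w ((z (nxt K + 1)).val)) (hωdet y y' hy hy' h0 (nxt K + 1))
  -- surjectivity: construct a fiber point for each class
  have hsig_bij : ∀ h : Fin r, Function.Bijective (sigma h) :=
    fun h => Finite.injective_iff_bijective.1 (hsig_inj h)
  set einv : Fin r → Fin m → Fin m := fun h => Function.invFun (sigma h) with heinvdef
  have heinv_spec : ∀ h w, sigma h (einv h w) = w :=
    fun h w => Function.rightInverse_invFun (hsig_bij h).2 w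
  have hsurj : ∀ ι : Fin m, ∃ y : ℤ → Fin n,
      BP y ∧ y ∈ orbitClosure yφ ∧ ν (y (-(sZ 0:ℤ))) = ι := by
    intro ι
    set wb : ℕ → Fin m :=
      fun k => Nat.rec (motive := fun _ => Fin m) ι (fun k' w => einv (z (k'+1)) w) k with hwbdef
    have hwb0 : wb 0 = ι := rfl
    have hwbchain : ∀ k, sigma (z (k+1)) (wb (k+1)) = wb k := by
      intro k
      exact heinv_spec _ _
    have heinv_zero : ∀ (h : Fin r) (w : Fin m), h.val = 0 → einv h w = w := by
      intro h w h0
      have hh : h = ⟨0, NeZero.pos r⟩ := Fin.ext h0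
      rw [hh]
      have h1 := heinv_spec ⟨0, NeZero.pos r⟩ w
      rwa [hsig_zero] at h1
    have hwbconst : ∀ d km, (∀ l, km ≤ l → l < km + d → (z (l+1)).val = 0) →
        wb (km + d) = wb km := by
      intro d
      induction d with
      | zero => intro km _; rfl
      | succ d ih =>
        intro km hzz
        have h1 : wb (km + d + 1) = einv (z (km + d + 1)) (wb (km + d)) := rfl
        rw [show km + (d + 1) = km + d + 1 by ring, h1,
          heinv_zero _ _ (hzz (km + d) (by omega) (by omega)),
          ih km (fun l hl hld => hzz l hl (by omega))]
    have hwb_nxt : ∀ k, wb (nxt k) = wb k := by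
      intro k
      obtain ⟨d, hd⟩ : ∃ d, nxt k = k + d := ⟨nxt k - k, by have := hnxt_ge k; omega⟩
      rw [hd]
      exact hwbconst d k (fun l hl hld => hnxt_min k l hl (by omega))
    set bb : ℕ → Fin n := fun k => cval (wb (nxt k + 1)) ((z (nxt k + 1)).val) with hbbdef
    have hν_bb : ∀ k, ν (bb k) = wb k := by
      intro k
      have h0 := hnxt_nz k
      show ν (cval (wb (nxt k + 1)) ((z (nxt k + 1)).val)) = wb k
      rw [hνcval _ _ (Nat.pos_of_ne_zero h0) (z (nxt k + 1)).isLt]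
      have h2 : sigma ⟨(z (nxt k + 1)).val, (z (nxt k + 1)).isLt⟩ (wb (nxt k + 1))
          = sigma (z (nxt k + 1)) (wb (nxt k + 1)) := rfl
      rw [h2, hwbchain (nxt k), hwb_nxt k]
    have hbchain : ∀ k, bb k = φ (bb (k+1)) (z (k+1)) := by
      intro k
      rcases Nat.eq_zero_or_pos (z (k+1)).val with h0 | h0
      · have hnn : nxt k = nxt (k+1) := hnxt_zero k h0
        rw [show z (k+1) = ⟨0, NeZero.pos r⟩ from Fin.ext h0, hq4]
        show cval (wb (nxt k + 1)) ((z (nxt k + 1)).val)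
          = cval (wb (nxt (k+1) + 1)) ((z (nxt (k+1) + 1)).val)
        rw [hnn]
      · have h1 : nxt k = k := hnxt_self k (by omega)
        show cval (wb (nxt k + 1)) ((z (nxt k + 1)).val) = _
        rw [h1, show z (k+1) = ⟨(z (k+1)).val, (z (k+1)).isLt⟩ from rfl,
          hφeq _ _ h0 (z (k+1)).isLt, hν_bb (k+1)]
    -- consistency of the glued definitions
    have hcons : ∀ (t : ℤ) (k k' : ℕ), k ≤ k' → 0 ≤ t + (sZ k:ℤ) →
        (t + (sZ k:ℤ)).toNat < r ^ (k+1) →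
        (0 ≤ t + (sZ k':ℤ) ∧ (t + (sZ k':ℤ)).toNat < r ^ (k'+1)) ∧
        wordIter φ (k'+1) (bb k') (t + (sZ k':ℤ)).toNat
          = wordIter φ (k+1) (bb k) (t + (sZ k:ℤ)).toNat := by
    
      intro t k k' hkk h1 h2
      induction k', hkk using Nat.le_induction with
      | base => exact ⟨⟨h1, h2⟩, rfl⟩
      | succ K hKK ih =>
        obtain ⟨⟨g1, g2⟩, geq⟩ := ih
        have hzsucc := hsZsucc K
        have hso : r ^ (K+1+1) = r ^ (K+2) := rfl
        have hvalid2 : (t + (sZ (K+1):ℤ)).toNat < r ^ (K+1+1) := by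
          have h6 := hstep1 K ((t + (sZ K:ℤ)).toNat) ((z (K+1)).val) g2
            (by have := (z (K+1)).isLt; omega)
          omega
        have hvalid1 : 0 ≤ t + (sZ (K+1):ℤ) := by omega
        refine ⟨⟨hvalid1, hvalid2⟩, ?_⟩
        have htn : (t + (sZ (K+1):ℤ)).toNat = (z (K+1)).val * r ^ (K+1) + (t + (sZ K:ℤ)).toNat := by
          omega
        rw [htn]
        have h8 := Stmt9Aux.wordIter_split φ (K+1) (bb (K+1)) ((z (K+1)).val)
          ((t + (sZ K:ℤ)).toNat) (z (K+1)).isLt g2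
        rw [h8]
        have h9 : φ (bb (K+1)) ⟨(z (K+1)).val, (z (K+1)).isLt⟩ = bb K := (hbchain K).symm
        rw [h9, geq]
    choose KC hKC using hcover
    set yb : ℤ → Fin n :=
      fun t => wordIter φ (KC t + 1) (bb (KC t)) ((t + (sZ (KC t):ℤ)).toNat) with hybdef
    have homb : ∀ (t : ℤ) (k : ℕ), 0 ≤ t + (sZ k:ℤ) → (t + (sZ k:ℤ)).toNat < r ^ (k+1) →
        yb t = wordIter φ (k+1) (bb k) ((t + (sZ k:ℤ)).toNat) := by
      intro t k hv1 hv2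
      have hA := hcons t k (max k (KC t)) (le_max_left _ _) hv1 hv2
      have hBv := hKC t (KC t) le_rfl
      have hB := hcons t (KC t) (max k (KC t)) (le_max_right _ _) hBv.1 hBv.2
      show wordIter φ (KC t + 1) (bb (KC t)) ((t + (sZ (KC t):ℤ)).toNat) = _
      rw [← hB.2, hA.2]
    have hyb_b : ∀ k, yb (-(sZ k:ℤ)) = bb k := by
      intro k
      have hv1 : (0:ℤ) ≤ -(sZ k:ℤ) + (sZ k:ℤ) := by omega
      have hv2 : ((-(sZ k:ℤ) + (sZ k:ℤ)).toNat) < r ^ (k+1) := by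
        have := pow_pos (NeZero.pos r) (k+1)
        omega
      rw [homb (-(sZ k:ℤ)) k hv1 hv2]
      rw [show (-(sZ k:ℤ) + (sZ k:ℤ)).toNat = 0 by omega, hWI0]
    have hBPyb : BP yb := by
      intro k jj hjj
      have hv1 : (0:ℤ) ≤ ((jj:ℤ) - (sZ k:ℤ)) + (sZ k:ℤ) := by omega
      have hv2 : (((jj:ℤ) - (sZ k:ℤ)) + (sZ k:ℤ)).toNat < r ^ (k+1) := by omega
      rw [homb _ k hv1 hv2, hyb_b k,
        show (((jj:ℤ) - (sZ k:ℤ)) + (sZ k:ℤ)).toNat = jj by omega]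
    have hmemyb : yb ∈ orbitClosure yφ := by
      apply Stmt9Aux.mem_orbitClosure_of_windows
      intro M
      obtain ⟨K1, hK1⟩ := hg1 M
      obtain ⟨K2, hK2⟩ := hg2 (M+1)
      set k := max K1 K2 with hkdef
      have g1 : M ≤ sZ k := hK1 k (le_max_left _ _)
      have g2 : sZ k + (M+1) < r ^ (k+1) := hK2 k (le_max_right _ _)
      have h0 := hnxt_nz k
      obtain ⟨t₀, ht₀⟩ := hletter (wb (nxt k + 1)) ((z (nxt k + 1)).val)
        (Nat.pos_of_ne_zero h0) (z (nxt k + 1)).isLt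
      have ht₀' : yφ t₀ = bb k := ht₀
      refine ⟨(r:ℤ)^(k+1) * t₀ + (sZ k:ℤ), ?_⟩
      intro t ht
      rw [abs_le] at ht
      have hv1 : 0 ≤ t + (sZ k:ℤ) := by omega
      have hv2 : (t + (sZ k:ℤ)).toNat < r ^ (k+1) := by omega
      have hblock := Stmt9Aux.isSubFix_block hyφ (k+1) t₀ ((t + (sZ k:ℤ)).toNat) hv2
      have hposeq : t + ((r:ℤ)^(k+1) * t₀ + (sZ k:ℤ))
          = (r:ℤ)^(k+1) * t₀ + (((t + (sZ k:ℤ)).toNat : ℕ) : ℤ) := by omega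
      rw [hposeq, hblock, ht₀', ← homb t k hv1 hv2]
    refine ⟨yb, hBPyb, hmemyb, ?_⟩
    rw [hyb_b 0, hν_bb 0, hwb0]
  -- conclusion: the fiber is in bijection with Fin m
  have hcount : Nat.card ↥{y : ↥(orbitClosure yφ) | f y = z} = m := by
    have hbij : Function.Bijective
        (fun y : ↥{y : ↥(orbitClosure yφ) | f y = z} =>
          ν ((y.1 : ℤ → Fin n) (-(sZ 0:ℤ)))) := by
      constructor
      · intro y y' he
        have hy := (hmem_iff y.1).1 y.2
        have hy' := (hmem_iff y'.1).1 y'.2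
        apply Subtype.ext
        apply Subtype.ext
        exact hinj _ _ hy hy' he
      · intro ι
        obtain ⟨y, hBPy, hmemy, hνy⟩ := hsurj ι
        exact ⟨⟨⟨y, hmemy⟩, (hmem_iff ⟨y, hmemy⟩).2 hBPy⟩, hνy⟩
    rw [Nat.card_eq_of_bijective _ hbij, Nat.card_eq_fintype_card, Fintype.card_fin]
  rw [← Nat.card_coe_set_eq]
  exact hcount
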